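/- arXiv:2211.15488 — 6 statements merged into one kernel-verified Lean document; each statement's English description precedes it below -/
import Mathlib

section
/- Let (X,d) be a metric space and p a point in a completion or boundary at which the following holds: for all sequences z_n → p and w_n → p (in the ambient topology), and any fixed base point o, one has liminf (z_n|w_n)_o = ∞. Then for every ε > 0, every sequence of curves γ_n joining z_n to w_n with length L(γ_n) ≤ d(z_n,w_n) + ε eventually leaves every fixed bounded set around o; i.e. inf_{t} d(γ_n(t), o) → ∞. -/
open Set Filter Topology

/-- (b) ⇒ (a) of Proposition 2, abstract metric version.
`X` is a metric space sitting in an ambient topological space `T` via a map `ι`, and `p ∈ T`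
is a boundary point. If for all sequences `z_n → p`, `w_n → p` (in the ambient topology) the
Gromov products `(z_n|w_n)_o` tend to `∞` (i.e. the liminf is `∞`), then for every `ε > 0`,
every sequence of curves `γ_n : [a_n, b_n] → X` joining `z_n` to `w_n` of length at most
`d(z_n, w_n) + ε` eventually leaves every bounded set around `o`:
`inf_t d(γ_n(t), o) → ∞`. -/
theorem stmt_2 {X T : Type*} [MetricSpace X] [TopologicalSpace T]
    (ι : X → T) (p : T) (o : X)
    (h : ∀ z w : ℕ → X,
      Tendsto (fun n => ι (z n)) atTop (𝓝 p) → Tendsto (fun n => ι (w n)) atTop (𝓝 p) →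
      Tendsto (fun n => (dist (z n) o + dist (w n) o - dist (z n) (w n)) / 2) atTop atTop) :
    ∀ ε > (0 : ℝ), ∀ z w : ℕ → X,
      Tendsto (fun n => ι (z n)) atTop (𝓝 p) → Tendsto (fun n => ι (w n)) atTop (𝓝 p) →
      ∀ (a b : ℕ → ℝ) (γ : ℕ → ℝ → X),
        (∀ n, a n ≤ b n) → (∀ n, γ n (a n) = z n) → (∀ n, γ n (b n) = w n) →
        (∀ n, eVariationOn (γ n) (Icc (a n) (b n)) ≤ ENNReal.ofReal (dist (z n) (w n) + ε)) →
        Tendsto (fun n => ⨅ t : Icc (a n) (b n), dist (γ n t) o) atTop atTop := by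
  intro ε εpos z w hz hw a b γ hab ha hb hlen
  have hG := h z w hz hw
  have key : ∀ n, (dist (z n) o + dist (w n) o - dist (z n) (w n)) / 2 - ε / 2 ≤
      ⨅ t : Icc (a n) (b n), dist (γ n t) o := by
    intro n
    haveI : Nonempty (Icc (a n) (b n)) := (nonempty_Icc.2 (hab n)).to_subtype
    refine le_ciInf fun t => ?_
    obtain ⟨t, ht⟩ := t
    have hsplit := eVariationOn.Icc_add_Icc (γ n) (s := Icc (a n) (b n)) ht.1 ht.2 ht
    have h1 : Icc (a n) (b n) ∩ Icc (a n) t = Icc (a n) t := by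
      rw [Set.inter_eq_right]
      exact Icc_subset_Icc le_rfl ht.2
    have h2 : Icc (a n) (b n) ∩ Icc t (b n) = Icc t (b n) := by
      rw [Set.inter_eq_right]
      exact Icc_subset_Icc ht.1 le_rfl
    have h3 : Icc (a n) (b n) ∩ Icc (a n) (b n) = Icc (a n) (b n) := Set.inter_self _
    rw [h1, h2, h3] at hsplit
    have e1 : edist (γ n (a n)) (γ n t) ≤ eVariationOn (γ n) (Icc (a n) t) :=
      eVariationOn.edist_le _ ⟨le_rfl, ht.1⟩ ⟨ht.1, le_rfl⟩
    have e2 : edist (γ n t) (γ n (b n)) ≤ eVariationOn (γ n) (Icc t (b n)) :=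
      eVariationOn.edist_le _ ⟨le_rfl, ht.2⟩ ⟨ht.2, le_rfl⟩
    have etot : edist (γ n (a n)) (γ n t) + edist (γ n t) (γ n (b n)) ≤
        ENNReal.ofReal (dist (z n) (w n) + ε) := by
      calc edist (γ n (a n)) (γ n t) + edist (γ n t) (γ n (b n))
          ≤ eVariationOn (γ n) (Icc (a n) t) + eVariationOn (γ n) (Icc t (b n)) :=
            add_le_add e1 e2
        _ = eVariationOn (γ n) (Icc (a n) (b n)) := hsplit
        _ ≤ _ := hlen n
    rw [edist_dist, edist_dist, ← ENNReal.ofReal_add dist_nonneg dist_nonneg] at etot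
    have hreal : dist (γ n (a n)) (γ n t) + dist (γ n t) (γ n (b n)) ≤
        dist (z n) (w n) + ε :=
      (ENNReal.ofReal_le_ofReal_iff (by positivity)).1 etot
    rw [ha n, hb n] at hreal
    have t1 : dist (z n) o ≤ dist (z n) (γ n t) + dist (γ n t) o := dist_triangle _ _ _
    have t2 : dist (w n) o ≤ dist (γ n t) (w n) + dist (γ n t) o := by
      rw [dist_comm (γ n t) (w n)]; exact dist_triangle _ _ _
    linarith
  exact tendsto_atTop_mono key
    (by simpa [sub_eq_add_neg] using tendsto_atTop_add_const_right atTop (-(ε/2)) hG)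
end

section
/- Let (X,d) be a metric space, o ∈ X, and p a boundary point. Suppose that for every ε > 0, p has well-behaved ε-geodesics: for all z_n, w_n → p and all ε-geodesics γ_n joining z_n to w_n, one has inf_t d(γ_n(t), o) → ∞. Then liminf_{z,w → p} (z|w)_o = ∞, provided that for every pair z,w ∈ X and every ε > 0 there exists an ε-geodesic joining z to w. -/
open Set Filter Topology

/-- (a) ⇒ (b) of Proposition 2, abstract metric version.
`X` is a metric space sitting in an ambient topological space `T` via `ι`, `p ∈ T` a boundary
point, `o ∈ X` a base point. Assume `ε`-geodesics exist: for every `z, w ∈ X` and `ε > 0`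
there is a curve `γ : [a,b] → X` from `z` to `w` of length at most `d(z,w) + ε`.
If `p` has well-behaved `ε`-geodesics for every `ε > 0` (i.e. for all sequences `z_n, w_n → p`
and all `ε`-geodesics `γ_n` joining them, `inf_t d(γ_n(t), o) → ∞`), then
`liminf_{z,w → p} (z|w)_o = ∞`: for all sequences `z_n, w_n → p` the Gromov products tend
to `∞`. -/
theorem stmt_3 {X T : Type*} [MetricSpace X] [TopologicalSpace T]
    (ι : X → T) (p : T) (o : X)
    (hexist : ∀ z w : X, ∀ ε > (0 : ℝ), ∃ (a b : ℝ) (γ : ℝ → X), a ≤ b ∧ γ a = z ∧ γ b = w ∧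
      eVariationOn γ (Icc a b) ≤ ENNReal.ofReal (dist z w + ε))
    (hwb : ∀ ε > (0 : ℝ), ∀ z w : ℕ → X,
      Tendsto (fun n => ι (z n)) atTop (𝓝 p) → Tendsto (fun n => ι (w n)) atTop (𝓝 p) →
      ∀ (a b : ℕ → ℝ) (γ : ℕ → ℝ → X),
        (∀ n, a n ≤ b n) → (∀ n, γ n (a n) = z n) → (∀ n, γ n (b n) = w n) →
        (∀ n, eVariationOn (γ n) (Icc (a n) (b n)) ≤ ENNReal.ofReal (dist (z n) (w n) + ε)) →
        Tendsto (fun n => ⨅ t : Icc (a n) (b n), dist (γ n t) o) atTop atTop) :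
    ∀ z w : ℕ → X,
      Tendsto (fun n => ι (z n)) atTop (𝓝 p) → Tendsto (fun n => ι (w n)) atTop (𝓝 p) →
      Tendsto (fun n => (dist (z n) o + dist (w n) o - dist (z n) (w n)) / 2) atTop atTop := by
  intro z w hz hw
  by_contra hcon
  -- there is a bound C with the Gromov product frequently below C
  rw [tendsto_atTop] at hcon
  push_neg at hcon
  obtain ⟨C, hC⟩ := hcon
  have hC' : ∃ᶠ n in atTop, (dist (z n) o + dist (w n) o - dist (z n) (w n)) / 2 < max C 1 := by
    refine hC.mono fun n hn => ?_
    exact hn.trans_le (le_max_left _ _)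
  obtain ⟨φ, hφ, hφC⟩ := extraction_of_frequently_atTop hC'
  set z' : ℕ → X := fun k => z (φ k) with hz'
  set w' : ℕ → X := fun k => w (φ k) with hw'
  have hz't : Tendsto (fun k => ι (z' k)) atTop (𝓝 p) := hz.comp hφ.tendsto_atTop
  have hw't : Tendsto (fun k => ι (w' k)) atTop (𝓝 p) := hw.comp hφ.tendsto_atTop
  -- build concatenated ε-geodesics through o
  have h1 : ∀ k, ∃ (a b : ℝ) (γ : ℝ → X), a ≤ b ∧ γ a = z' k ∧ γ b = o ∧
      eVariationOn γ (Icc a b) ≤ ENNReal.ofReal (dist (z' k) o + 1/2) :=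
    fun k => hexist (z' k) o (1/2) (by norm_num)
  have h2 : ∀ k, ∃ (a b : ℝ) (γ : ℝ → X), a ≤ b ∧ γ a = o ∧ γ b = w' k ∧
      eVariationOn γ (Icc a b) ≤ ENNReal.ofReal (dist o (w' k) + 1/2) :=
    fun k => hexist o (w' k) (1/2) (by norm_num)
  choose a1 b1 γ1 hab1 hγ1a hγ1b hvar1 using h1
  choose a2 b2 γ2 hab2 hγ2a hγ2b hvar2 using h2
  set A : ℕ → ℝ := fun k => a1 k with hA
  set B : ℕ → ℝ := fun k => b1 k + (b2 k - a2 k) with hB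
  set Γ : ℕ → ℝ → X := fun k t => if t < b1 k then γ1 k t else γ2 k (t - b1 k + a2 k) with hΓ
  have hAB : ∀ k, A k ≤ B k := fun k => by
    have := hab1 k; have := hab2 k
    simp only [hA, hB]; linarith
  have hΓA : ∀ k, Γ k (A k) = z' k := by
    intro k
    simp only [hΓ, hA]
    rcases lt_or_eq_of_le (hab1 k) with h | h
    · rw [if_pos h, hγ1a k]
    · rw [h, if_neg (lt_irrefl _), show b1 k - b1 k + a2 k = a2 k by ring, hγ2a k, ← hγ1b k, ← h]
      exact hγ1a k
  have hΓB : ∀ k, Γ k (B k) = w' k := by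
    intro k
    simp only [hΓ, hB]
    rcases lt_or_eq_of_le (hab2 k) with h | h
    · rw [if_neg (by linarith), show b1 k + (b2 k - a2 k) - b1 k + a2 k = b2 k by ring]
      exact hγ2b k
    · rw [← h, sub_self, add_zero, if_neg (lt_irrefl _),
        show b1 k - b1 k + a2 k = a2 k by ring, hγ2a k, ← hγ2b k, ← h, hγ2a k]
  -- Γ k agrees with γ1 k on [a1, b1] and with translated γ2 k on [b1, B]
  have hEq1 : ∀ k, EqOn (Γ k) (γ1 k) (Icc (a1 k) (b1 k)) := by
    intro k t ht
    simp only [hΓ]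
    rcases lt_or_eq_of_le ht.2 with h | h
    · rw [if_pos h]
    · rw [h, if_neg (lt_irrefl _), sub_self, zero_add, hγ2a k, hγ1b k]
  have hEq2 : ∀ k, EqOn (Γ k) ((γ2 k) ∘ fun t => t - b1 k + a2 k) (Icc (b1 k) (B k)) := by
    intro k t ht
    simp only [hΓ, Function.comp]
    rw [if_neg (not_lt.mpr ht.1)]
  -- variation bound for Γ
  have hvar : ∀ k, eVariationOn (Γ k) (Icc (A k) (B k)) ≤
      ENNReal.ofReal (dist (z' k) (w' k) + (2 * max C 1 + 1)) := by
    intro k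
    have hsplit : Icc (A k) (B k) = Icc (a1 k) (b1 k) ∪ Icc (b1 k) (B k) := by
      rw [Icc_union_Icc_eq_Icc (hab1 k) (by simp only [hB]; linarith [hab2 k])]
    have hgreat : IsGreatest (Icc (a1 k) (b1 k)) (b1 k) := isGreatest_Icc (hab1 k)
    have hleast : IsLeast (Icc (b1 k) (B k)) (b1 k) :=
      isLeast_Icc (by simp only [hB]; linarith [hab2 k])
    rw [hsplit, eVariationOn.union (Γ k) hgreat hleast,
      eVariationOn.eq_of_eqOn (hEq1 k), eVariationOn.eq_of_eqOn (hEq2 k)]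
    have hcomp : eVariationOn ((γ2 k) ∘ fun t => t - b1 k + a2 k) (Icc (b1 k) (B k)) ≤
        eVariationOn (γ2 k) (Icc (a2 k) (b2 k)) := by
      apply eVariationOn.comp_le_of_monotoneOn
      · intro x hx y hy hxy
        dsimp; linarith
      · intro t ht
        constructor
        · have := ht.1; dsimp; linarith
        · have := ht.2; simp only [hB] at this; dsimp; linarith
    calc eVariationOn (γ1 k) (Icc (a1 k) (b1 k)) +
          eVariationOn ((γ2 k) ∘ fun t => t - b1 k + a2 k) (Icc (b1 k) (B k))
        ≤ ENNReal.ofReal (dist (z' k) o + 1/2) + ENNReal.ofReal (dist o (w' k) + 1/2) :=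
          add_le_add (hvar1 k) (hcomp.trans (hvar2 k))
      _ = ENNReal.ofReal ((dist (z' k) o + 1/2) + (dist o (w' k) + 1/2)) :=
          (ENNReal.ofReal_add (by positivity) (by positivity)).symm
      _ ≤ ENNReal.ofReal (dist (z' k) (w' k) + (2 * max C 1 + 1)) := by
          apply ENNReal.ofReal_le_ofReal
          have hk := hφC k
          have : dist (z (φ k)) o + dist (w (φ k)) o - dist (z (φ k)) (w (φ k)) <
              2 * max C 1 := by linarith
          simp only [hz', hw', dist_comm o (w' k)]
          linarith [this, dist_comm o (w (φ k))]
  -- apply well-behavedness to get a contradiction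
  have hEpos : (0 : ℝ) < 2 * max C 1 + 1 := by
    have : (1 : ℝ) ≤ max C 1 := le_max_right _ _
    linarith
  have htends := hwb (2 * max C 1 + 1) hEpos z' w' hz't hw't A B Γ hAB hΓA hΓB hvar
  -- but o lies on each Γ k, so the infimum is always ≤ 0
  have hle : ∀ k, (⨅ t : Icc (A k) (B k), dist (Γ k t) o) ≤ 0 := by
    intro k
    have hmem : b1 k ∈ Icc (A k) (B k) :=
      ⟨hab1 k, by simp only [hB]; linarith [hab2 k]⟩
    have hval : dist (Γ k (b1 k)) o = 0 := by
      have : Γ k (b1 k) = o := by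
        simp only [hΓ, if_neg (lt_irrefl _), sub_self, zero_add]
        exact hγ2a k
      rw [this, dist_self]
    calc (⨅ t : Icc (A k) (B k), dist (Γ k t) o) ≤ dist (Γ k (⟨b1 k, hmem⟩ : Icc (A k) (B k))) o :=
          ciInf_le ⟨0, fun x hx => by obtain ⟨t, rfl⟩ := hx; exact dist_nonneg⟩ _
      _ = 0 := hval
  have : ∀ᶠ k in atTop, (1 : ℝ) ≤ ⨅ t : Icc (A k) (B k), dist (Γ k t) o :=
    htends.eventually_ge_atTop 1
  obtain ⟨k, hk⟩ := this.exists
  linarith [hle k]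
end

section
/- Let Ω ⊆ ℂⁿ be a domain, p ∈ ∂Ω, and suppose there exist bounded neighbourhoods V ⊂⊂ U of p such that c' := k_Ω(Ω ∩ V, Ω \ U) > 0, where k_Ω denotes the Kobayashi pseudodistance. Then for all distinct z, w ∈ Ω ∩ V one has k_Ω(z,w) > 0. (Royden's localization lemma is used: tanh(k_Ω(z, Ω\U)) · κ_{Ω∩U}(z;v) ≤ κ_Ω(z;v) for z ∈ Ω ∩ U.) -/
open Set Metric Filter Topology MeasureTheory

noncomputable section

/-- Inverse hyperbolic tangent. -/
def artanh (x : ℝ) : ℝ := (1 / 2) * Real.log ((1 + x) / (1 - x))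

variable {n : ℕ}

/-- The extremal quantity `l̃_Ω` in the definition of the Lempert function:
the infimum of `|α|` over holomorphic discs `φ : Δ → Ω` with `φ 0 = z`, `φ α = w`. -/
def lempertT (Ω : Set (EuclideanSpace ℂ (Fin n))) (z w : EuclideanSpace ℂ (Fin n)) : ℝ :=
  sInf {r : ℝ | ∃ (α : ℂ) (φ : ℂ → EuclideanSpace ℂ (Fin n)), r = ‖α‖ ∧ α ∈ ball (0 : ℂ) 1 ∧
    DifferentiableOn ℂ φ (ball (0 : ℂ) 1) ∧ MapsTo φ (ball (0 : ℂ) 1) Ω ∧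
    φ 0 = z ∧ φ α = w}

/-- The Lempert function `l_Ω = artanh l̃_Ω`. -/
def lempert (Ω : Set (EuclideanSpace ℂ (Fin n))) (z w : EuclideanSpace ℂ (Fin n)) : ℝ :=
  artanh (lempertT Ω z w)

/-- The Kobayashi pseudodistance: the largest pseudodistance below the Lempert function,
realized as the infimum over chains. -/
def kobDist (Ω : Set (EuclideanSpace ℂ (Fin n))) (z w : EuclideanSpace ℂ (Fin n)) : ℝ :=
  sInf {r : ℝ | ∃ (m : ℕ) (x : ℕ → EuclideanSpace ℂ (Fin n)), x 0 = z ∧ x m = w ∧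
    (∀ i ≤ m, x i ∈ Ω) ∧ r = ∑ i ∈ Finset.range m, lempert Ω (x i) (x (i + 1))}

/-- The Kobayashi–Royden pseudometric. -/
def kobRoyden (Ω : Set (EuclideanSpace ℂ (Fin n))) (z v : EuclideanSpace ℂ (Fin n)) : ℝ :=
  sInf {r : ℝ | ∃ (c : ℂ) (φ : ℂ → EuclideanSpace ℂ (Fin n)), r = ‖c‖ ∧
    DifferentiableOn ℂ φ (ball (0 : ℂ) 1) ∧ MapsTo φ (ball (0 : ℂ) 1) Ω ∧
    φ 0 = z ∧ c • deriv φ 0 = v}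

/-- The Kobayashi–Royden length of a curve `γ` on `[a,b]`. -/
def kobLength (Ω : Set (EuclideanSpace ℂ (Fin n))) (γ : ℝ → EuclideanSpace ℂ (Fin n))
    (a b : ℝ) : ℝ := ∫ t in a..b, kobRoyden Ω (γ t) (deriv γ t)

/-- An `ε`-geodesic for the Kobayashi length: an (absolutely) continuous curve in `Ω`
whose Kobayashi–Royden length exceeds the Kobayashi distance of its endpoints by at most `ε`. -/
def IsEpsGeodesic (Ω : Set (EuclideanSpace ℂ (Fin n))) (γ : ℝ → EuclideanSpace ℂ (Fin n))
    (a b : ℝ) (ε : ℝ) : Prop :=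
  a ≤ b ∧ ContinuousOn γ (Icc a b) ∧ MapsTo γ (Icc a b) Ω ∧
    kobLength Ω γ a b ≤ kobDist Ω (γ a) (γ b) + ε

/-- The Gromov product with respect to the Kobayashi distance. -/
def gromovK (Ω : Set (EuclideanSpace ℂ (Fin n))) (z w o : EuclideanSpace ℂ (Fin n)) : ℝ :=
  (kobDist Ω z o + kobDist Ω w o - kobDist Ω z w) / 2

/-- `p ∈ ∂Ω` is a `w`-point: for every neighbourhood `U` of `p` with `Ω \ U ≠ ∅`,
`lim_{z,w→p} inf_{o ∈ Ω \ U} (z|w)^Ω_o = ∞`. -/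
def IsWPoint (Ω : Set (EuclideanSpace ℂ (Fin n))) (p : EuclideanSpace ℂ (Fin n)) : Prop :=
  ∀ U ∈ 𝓝 p, (Ω \ U).Nonempty →
    ∀ M : ℝ, ∃ V ∈ 𝓝 p, ∀ z ∈ Ω ∩ V, ∀ w ∈ Ω ∩ V, ∀ o ∈ Ω \ U, M ≤ gromovK Ω z w o

/-- `p ∈ ∂Ω` is a `v`-point: `Ω` satisfies the weak Gromov property at `p`, i.e.
`liminf_{z→p, w→q} (k_Ω(z,w) - k_Ω(z,o)) > -∞` for every `o ∈ Ω` and every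
boundary point `q ≠ p`. -/
def IsVPoint (Ω : Set (EuclideanSpace ℂ (Fin n))) (p : EuclideanSpace ℂ (Fin n)) : Prop :=
  ∀ o ∈ Ω, ∀ q ∈ frontier Ω, q ≠ p →
    ∃ (M : ℝ) (V : Set (EuclideanSpace ℂ (Fin n))) (W : Set (EuclideanSpace ℂ (Fin n))),
      V ∈ 𝓝 p ∧ W ∈ 𝓝 q ∧ ∀ z ∈ Ω ∩ V, ∀ w ∈ Ω ∩ W, M ≤ kobDist Ω z w - kobDist Ω z o

/-- The Euclidean distance to the boundary. -/
def bdist (Ω : Set (EuclideanSpace ℂ (Fin n))) (z : EuclideanSpace ℂ (Fin n)) : ℝ :=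
  Metric.infDist z (frontier Ω)

end

section AuxStmt5
open Set Metric Complex Polynomial
noncomputable section


lemma artanh_zero : artanh 0 = 0 := by simp [artanh]

lemma artanh_mono {a b : ℝ} (ha : 0 ≤ a) (hab : a ≤ b) (hb : b < 1) : artanh a ≤ artanh b := by
  have h1 : (0:ℝ) < 1 - b := by linarith
  have h2 : (0:ℝ) < 1 - a := by linarith
  have : (1 + a) / (1 - a) ≤ (1 + b) / (1 - b) := by
    rw [div_le_div_iff₀ h2 h1]; nlinarith
  have hpos : (0:ℝ) < (1 + a) / (1 - a) := by positivity
  have := Real.log_le_log hpos this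
  unfold artanh; linarith

lemma artanh_nonneg {x : ℝ} (hx : 0 ≤ x) (hx1 : x < 1) : 0 ≤ artanh x := by
  have := artanh_mono le_rfl hx hx1
  rwa [artanh_zero] at this

lemma half_le_artanh {x : ℝ} (hx : 0 ≤ x) (hx1 : x < 1) : x / 2 ≤ artanh x := by
  have h2 : (0:ℝ) < 1 - x := by linarith
  have h1 : (0:ℝ) < 1 + x := by linarith
  have hlog : Real.log (1 - x) ≤ -x := by
    have := Real.log_le_sub_one_of_pos h2; linarith
  have hlog2 : 0 ≤ Real.log (1 + x) := Real.log_nonneg (by linarith)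
  unfold artanh
  rw [Real.log_div (by positivity) (by positivity)]
  linarith

lemma artanh_tanh_repr {c : ℝ} (hc : 0 < c) :
    0 < (Real.exp c - 1) / (Real.exp c + 1) ∧ (Real.exp c - 1) / (Real.exp c + 1) < 1 ∧
    artanh ((Real.exp c - 1) / (Real.exp c + 1)) = c / 2 := by
  have he : 1 < Real.exp c := by
    have := Real.add_one_le_exp c; nlinarith
  have hep : (0:ℝ) < Real.exp c + 1 := by linarith
  have hep2 : (0:ℝ) < Real.exp c - 1 := by linarith
  refine ⟨by positivity, ?_, ?_⟩
  · rw [div_lt_one hep]; linarith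
  · have h1 : 1 + (Real.exp c - 1) / (Real.exp c + 1) = 2 * Real.exp c / (Real.exp c + 1) := by
      field_simp; ring
    have h2 : 1 - (Real.exp c - 1) / (Real.exp c + 1) = 2 / (Real.exp c + 1) := by
      field_simp; norm_num
    unfold artanh
    rw [h1, h2]
    have : 2 * Real.exp c / (Real.exp c + 1) / (2 / (Real.exp c + 1)) = Real.exp c := by
      field_simp
    rw [this, Real.log_exp]; ring


variable {n : ℕ}
variable {Ω : Set (EuclideanSpace ℂ (Fin n))} {z w : EuclideanSpace ℂ (Fin n)}

def lempertSet (Ω : Set (EuclideanSpace ℂ (Fin n))) (z w : EuclideanSpace ℂ (Fin n)) : Set ℝ :=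
  {r : ℝ | ∃ (α : ℂ) (φ : ℂ → EuclideanSpace ℂ (Fin n)), r = ‖α‖ ∧ α ∈ ball (0 : ℂ) 1 ∧
    DifferentiableOn ℂ φ (ball (0 : ℂ) 1) ∧ MapsTo φ (ball (0 : ℂ) 1) Ω ∧
    φ 0 = z ∧ φ α = w}

lemma lempertT_eq : lempertT Ω z w = sInf (lempertSet Ω z w) := rfl

lemma lempertSet_nonneg : ∀ r ∈ lempertSet Ω z w, (0:ℝ) ≤ r := by
  rintro r ⟨α, φ, rfl, -⟩; exact norm_nonneg _

lemma lempertSet_lt_one : ∀ r ∈ lempertSet Ω z w, r < 1 := by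
  rintro r ⟨α, φ, rfl, hα, -⟩; simpa [mem_ball, dist_eq_norm] using hα

lemma lempertT_nonneg : 0 ≤ lempertT Ω z w :=
  Real.sInf_nonneg lempertSet_nonneg

lemma lempertT_le {r : ℝ} (hr : r ∈ lempertSet Ω z w) : lempertT Ω z w ≤ r :=
  csInf_le ⟨0, lempertSet_nonneg⟩ hr

lemma lempertT_lt_one (hne : (lempertSet Ω z w).Nonempty) : lempertT Ω z w < 1 := by
  obtain ⟨r, hr⟩ := hne
  exact lt_of_le_of_lt (lempertT_le hr) (lempertSet_lt_one r hr)

lemma lempert_nonneg : 0 ≤ lempert Ω z w := by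
  unfold lempert
  rcases eq_empty_or_nonempty (lempertSet Ω z w) with h | h
  · rw [lempertT_eq, h]; simp [Real.sInf_empty, artanh_zero]
  · exact artanh_nonneg lempertT_nonneg (lempertT_lt_one h)

lemma lempert_le_artanh {α : ℂ} {φ : ℂ → EuclideanSpace ℂ (Fin n)}
    (hα : α ∈ ball (0:ℂ) 1) (hd : DifferentiableOn ℂ φ (ball (0:ℂ) 1))
    (hm : MapsTo φ (ball (0:ℂ) 1) Ω) (h0 : φ 0 = z) (h1 : φ α = w) :
    lempert Ω z w ≤ artanh ‖α‖ := by
  have hmem : ‖α‖ ∈ lempertSet Ω z w := ⟨α, φ, rfl, hα, hd, hm, h0, h1⟩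
  exact artanh_mono lempertT_nonneg (lempertT_le hmem)
    (by simpa [mem_ball, dist_eq_norm] using hα)

def kobSet (Ω : Set (EuclideanSpace ℂ (Fin n))) (z w : EuclideanSpace ℂ (Fin n)) : Set ℝ :=
  {r : ℝ | ∃ (m : ℕ) (x : ℕ → EuclideanSpace ℂ (Fin n)), x 0 = z ∧ x m = w ∧
    (∀ i ≤ m, x i ∈ Ω) ∧ r = ∑ i ∈ Finset.range m, lempert Ω (x i) (x (i + 1))}

lemma kobDist_eq : kobDist Ω z w = sInf (kobSet Ω z w) := rfl

lemma kobSet_nonneg : ∀ r ∈ kobSet Ω z w, (0:ℝ) ≤ r := by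
  rintro r ⟨m, x, -, -, -, rfl⟩
  exact Finset.sum_nonneg fun i _ => lempert_nonneg

lemma kobDist_le {r : ℝ} (hr : r ∈ kobSet Ω z w) : kobDist Ω z w ≤ r :=
  csInf_le ⟨0, kobSet_nonneg⟩ hr

lemma le_kobDist {ε : ℝ} (hne : (kobSet Ω z w).Nonempty)
    (h : ∀ r ∈ kobSet Ω z w, ε ≤ r) : ε ≤ kobDist Ω z w :=
  le_csInf hne h

/-- chain truncation: distance from `x 0` to `x i` is at most the partial sum. -/
lemma kobDist_le_partial (x : ℕ → EuclideanSpace ℂ (Fin n)) (i : ℕ)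
    (hx : ∀ j ≤ i, x j ∈ Ω) :
    kobDist Ω (x 0) (x i) ≤ ∑ j ∈ Finset.range i, lempert Ω (x j) (x (j + 1)) :=
  kobDist_le ⟨i, x, rfl, rfl, hx, rfl⟩

/-- chain extension. -/
lemma kobDist_le_partial_add (x : ℕ → EuclideanSpace ℂ (Fin n)) (i : ℕ)
    (hx : ∀ j ≤ i, x j ∈ Ω) (y : EuclideanSpace ℂ (Fin n)) (hy : y ∈ Ω) :
    kobDist Ω (x 0) y ≤
      (∑ j ∈ Finset.range i, lempert Ω (x j) (x (j + 1))) + lempert Ω (x i) y := by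
  set x' : ℕ → EuclideanSpace ℂ (Fin n) := fun j => if j ≤ i then x j else y with hx'
  have e0 : x' 0 = x 0 := by simp [hx']
  have key : ∀ j ≤ i, x' j = x j := fun j hj => by simp [hx', hj]
  have elast : x' (i + 1) = y := by simp [hx']
  have hmem : ((∑ j ∈ Finset.range i, lempert Ω (x j) (x (j + 1))) + lempert Ω (x i) y)
      ∈ kobSet Ω (x 0) y := by
    refine ⟨i + 1, x', e0, elast, ?_, ?_⟩
    · intro j hj
      rcases Nat.lt_or_ge j (i+1) with h | h
      · rw [key j (Nat.lt_succ_iff.mp h)]; exact hx j (Nat.lt_succ_iff.mp h)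
      · have : j = i + 1 := le_antisymm hj h
        rw [this, elast]; exact hy
    · rw [Finset.sum_range_succ]
      congr 1
      · apply Finset.sum_congr rfl
        intro j hj
        rw [Finset.mem_range] at hj
        rw [key j hj.le, key (j+1) hj]
      · rw [key i le_rfl, elast]
  exact kobDist_le hmem



lemma sin_near_real (x y : ℝ) :
    ‖Complex.sin (x + y*Complex.I) - (Real.sin x : ℂ)‖ ≤ Real.exp |y| - 1 := by
  have h1 : Complex.sin ((x:ℂ) + (y:ℂ)*Complex.I)
      = Complex.sin x * Complex.cos ((y:ℂ)*I) + Complex.cos x * Complex.sin ((y:ℂ)*I) :=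
    Complex.sin_add _ _
  rw [h1, Complex.cos_mul_I, Complex.sin_mul_I]
  have hsin : Complex.sin (x:ℂ) = (Real.sin x : ℂ) := (Complex.ofReal_sin x).symm
  have hcos : Complex.cos (x:ℂ) = (Real.cos x : ℂ) := (Complex.ofReal_cos x).symm
  have hcosh : Complex.cosh (y:ℂ) = (Real.cosh y : ℂ) := (Complex.ofReal_cosh y).symm
  have hsinh : Complex.sinh (y:ℂ) = (Real.sinh y : ℂ) := (Complex.ofReal_sinh y).symm
  rw [hsin, hcos, hcosh, hsinh]
  have heq : (Real.sin x : ℂ) * (Real.cosh y : ℂ) + (Real.cos x : ℂ) * ((Real.sinh y:ℂ) * I)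
      - (Real.sin x : ℂ) = (↑(Real.sin x * (Real.cosh y - 1)) : ℂ) + (↑(Real.cos x * Real.sinh y):ℂ) * I := by
    push_cast; ring
  rw [heq]
  have hb : ‖(↑(Real.sin x * (Real.cosh y - 1)) : ℂ) + (↑(Real.cos x * Real.sinh y):ℂ) * I‖
      ≤ |Real.sin x * (Real.cosh y - 1)| + |Real.cos x * Real.sinh y| := by
    refine le_trans (norm_add_le _ _) ?_
    rw [norm_mul, Complex.norm_I, mul_one, Complex.norm_real, Complex.norm_real]
    exact le_rfl
  refine le_trans hb ?_
  have h2 : (1:ℝ) ≤ Real.cosh y := Real.one_le_cosh y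
  have e1 : |Real.sin x * (Real.cosh y - 1)| ≤ Real.cosh y - 1 := by
    rw [abs_mul, _root_.abs_of_nonneg (by linarith : (0:ℝ) ≤ Real.cosh y - 1)]
    exact mul_le_of_le_one_left (by linarith) (Real.abs_sin_le_one x)
  have e2 : |Real.cos x * Real.sinh y| ≤ Real.sinh |y| := by
    rw [abs_mul, Real.abs_sinh]
    have : (0:ℝ) ≤ Real.sinh |y| := by
      rw [← Real.sinh_zero]
      exact Real.sinh_le_sinh.mpr (abs_nonneg y)
    exact mul_le_of_le_one_left this (Real.abs_cos_le_one x)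
  have h3 : Real.cosh |y| + Real.sinh |y| = Real.exp |y| := Real.cosh_add_sinh _
  have h4 : Real.cosh |y| = Real.cosh y := Real.cosh_abs y
  linarith


noncomputable def hmap (s : ℝ) (ζ : ℂ) : ℂ :=
  Complex.sin (((2*s/Real.pi : ℝ) : ℂ) * Complex.log ((1+ζ)/(1-ζ)) - ((Real.pi/2 : ℝ) : ℂ))

lemma W_re_pos {ζ : ℂ} (hζ : ζ ∈ ball (0:ℂ) 1) : 0 < ((1+ζ)/(1-ζ)).re := by
  have hn : ζ ≠ 1 := by
    intro h; rw [h] at hζ; simp [mem_ball, dist_eq_norm] at hζ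
  have hne : (1:ℂ) - ζ ≠ 0 := by
    intro h; apply hn; have : (1:ℂ) = ζ := by linear_combination h
    exact this.symm
  have habs : Complex.normSq ζ < 1 := by
    rw [mem_ball, dist_eq_norm, sub_zero] at hζ
    have := Complex.normSq_eq_norm_sq ζ
    rw [this]; nlinarith [norm_nonneg ζ, hζ]
  rw [Complex.div_re]
  have hpos : 0 < Complex.normSq (1 - ζ) := Complex.normSq_pos.mpr hne
  have hnum : (1+ζ).re * (1-ζ).re + (1+ζ).im * (1-ζ).im = 1 - Complex.normSq ζ := by
    simp [Complex.add_re, Complex.add_im, Complex.sub_re, Complex.sub_im, Complex.normSq_apply]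
    ring
  have h0 : 0 < ((1+ζ).re * (1-ζ).re + (1+ζ).im * (1-ζ).im) := by rw [hnum]; linarith
  rw [← add_div]
  exact div_pos h0 hpos

lemma one_sub_ne {ζ : ℂ} (hζ : ζ ∈ ball (0:ℂ) 1) : (1:ℂ) - ζ ≠ 0 := by
  intro h
  have : ζ = 1 := by linear_combination -h
  rw [this] at hζ; simp [mem_ball, dist_eq_norm] at hζ

lemma hmap_differentiableAt {s : ℝ} {ζ : ℂ} (hζ : ζ ∈ ball (0:ℂ) 1) :
    DifferentiableAt ℂ (hmap s) ζ := by
  have hne := one_sub_ne hζ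
  have hd1 : DifferentiableAt ℂ (fun ζ : ℂ => (1+ζ)/(1-ζ)) ζ := by
    apply DifferentiableAt.div
    · exact (differentiable_const _).add differentiable_id |>.differentiableAt
    · exact (differentiable_const _).sub differentiable_id |>.differentiableAt
    · exact hne
  have hlog : DifferentiableAt ℂ Complex.log ((1+ζ)/(1-ζ)) :=
    Complex.differentiableAt_log (Or.inl (W_re_pos hζ))
  have : DifferentiableAt ℂ (fun ζ : ℂ => Complex.log ((1+ζ)/(1-ζ))) ζ := by have h := hlog.comp ζ hd1; exact h
  have h2 : DifferentiableAt ℂ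
      (fun ζ : ℂ => ((2*s/Real.pi : ℝ) : ℂ) * Complex.log ((1+ζ)/(1-ζ)) - ((Real.pi/2 : ℝ) : ℂ)) ζ :=
    ((this.const_mul _).sub_const _)
  exact (Complex.differentiable_sin _).comp ζ h2

lemma hmap_est {s : ℝ} (hs : 0 < s) {ζ : ℂ} (hζ : ζ ∈ ball (0:ℂ) 1) :
    ∃ t ∈ Icc (0:ℝ) 1, ‖(hmap s ζ + 1)/2 - (t:ℂ)‖ ≤ (Real.exp s - 1)/2 := by
  set inner := ((2*s/Real.pi : ℝ) : ℂ) * Complex.log ((1+ζ)/(1-ζ)) - ((Real.pi/2 : ℝ) : ℂ) with hin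
  have him : |inner.im| ≤ s := by
    have h1 : inner.im = (2*s/Real.pi) * (Complex.log ((1+ζ)/(1-ζ))).im := by
      simp [hin, Complex.sub_im, Complex.mul_im, Complex.ofReal_re, Complex.ofReal_im]
    have h2 : (Complex.log ((1+ζ)/(1-ζ))).im = Complex.arg ((1+ζ)/(1-ζ)) := Complex.log_im _
    have h3 : |Complex.arg ((1+ζ)/(1-ζ))| < Real.pi/2 := by
      rw [Complex.abs_arg_lt_pi_div_two_iff]
      exact Or.inl (W_re_pos hζ)
    have hpi : 0 < Real.pi := Real.pi_pos
    have hc : 0 < 2*s/Real.pi := by positivity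
    rw [h1, h2, abs_mul, abs_of_pos hc]
    calc 2*s/Real.pi * |Complex.arg ((1+ζ)/(1-ζ))| ≤ 2*s/Real.pi * (Real.pi/2) := by
          exact mul_le_mul_of_nonneg_left h3.le hc.le
      _ = s := by field_simp
  set x := inner.re
  set y := inner.im
  have hxy : inner = (x:ℂ) + (y:ℂ)*Complex.I := (Complex.re_add_im inner).symm
  have hb : ‖hmap s ζ - (Real.sin x : ℂ)‖ ≤ Real.exp s - 1 := by
    have := sin_near_real x y
    rw [hmap, ← hin, hxy] at *
    refine le_trans this ?_
    have : Real.exp |y| ≤ Real.exp s := Real.exp_le_exp.mpr him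
    linarith
  refine ⟨(Real.sin x + 1)/2, ⟨by nlinarith [Real.neg_one_le_sin x], by nlinarith [Real.sin_le_one x]⟩, ?_⟩
  have heq : (hmap s ζ + 1)/2 - (((Real.sin x + 1)/2 : ℝ) : ℂ)
      = (hmap s ζ - (Real.sin x : ℂ))/2 := by push_cast; ring
  rw [heq, norm_div]
  simp only [Complex.norm_ofNat]
  linarith

lemma hmap_zero {s : ℝ} (hs : 0 < s) : hmap s 0 = -1 := by
  have hpi : 0 < Real.pi := Real.pi_pos
  have h1 : ((1:ℂ)+0)/((1:ℂ)-0) = 1 := by norm_num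
  rw [hmap, h1, Complex.log_one, mul_zero, zero_sub]
  rw [Complex.sin_neg]
  have : Complex.sin ((Real.pi/2 : ℝ) : ℂ) = ((Real.sin (Real.pi/2) : ℝ) : ℂ) :=
    (Complex.ofReal_sin _).symm
  rw [this, Real.sin_pi_div_two]
  norm_num

lemma hmap_one {s : ℝ} (hs : 0 < s) :
    ∃ α : ℝ, 0 < α ∧ α < 1 ∧ hmap s (α:ℂ) = 1 := by
  have hpi : 0 < Real.pi := Real.pi_pos
  set v := Real.pi^2/(2*s) with hv
  have hvpos : 0 < v := by positivity
  set α := (Real.exp v - 1)/(Real.exp v + 1) with hα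
  have he : 1 < Real.exp v := by have := Real.add_one_le_exp v; nlinarith
  have hep : (0:ℝ) < Real.exp v + 1 := by linarith
  have hα0 : 0 < α := by apply div_pos <;> linarith
  have hα1 : α < 1 := by rw [div_lt_one hep]; linarith
  refine ⟨α, hα0, hα1, ?_⟩
  have hr : ((1:ℂ)+(α:ℂ))/((1:ℂ)-(α:ℂ)) = (((1+α)/(1-α) : ℝ) : ℂ) := by
    push_cast; ring
  have hαe : α*(Real.exp v+1) = Real.exp v - 1 := div_mul_cancel₀ _ hep.ne'
  have hratio : (1+α)/(1-α) = Real.exp v := by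
    have h1 : 1 + α = 2 * Real.exp v / (Real.exp v + 1) := by
      rw [eq_div_iff hep.ne']; linear_combination hαe
    have h2 : 1 - α = 2 / (Real.exp v + 1) := by
      rw [eq_div_iff hep.ne']; linear_combination -hαe
    rw [h1, h2]; field_simp
  have hlog : Complex.log (((1+α)/(1-α) : ℝ) : ℂ) = ((Real.log ((1+α)/(1-α)) : ℝ) : ℂ) := by
    rw [Complex.ofReal_log]
    rw [hratio]; positivity
  rw [hmap, hr, hlog, hratio, Real.log_exp]
  have hinner : ((2*s/Real.pi : ℝ) : ℂ) * ((v:ℝ):ℂ) - ((Real.pi/2 : ℝ) : ℂ)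
      = ((Real.pi/2 : ℝ) : ℂ) := by
    have : (2*s/Real.pi) * v = Real.pi := by rw [hv]; field_simp
    have h2 : ((2*s/Real.pi*v : ℝ) : ℂ) = ((Real.pi : ℝ) : ℂ) := by rw [this]
    push_cast at h2 ⊢
    rw [h2]; ring
  rw [hinner]
  have : Complex.sin ((Real.pi/2 : ℝ) : ℂ) = ((Real.sin (Real.pi/2) : ℝ) : ℂ) :=
    (Complex.ofReal_sin _).symm
  rw [this, Real.sin_pi_div_two]
  norm_num



lemma complex_coord_approx (f : ℝ → ℂ) (hf : ContinuousOn f (Icc (0:ℝ) 1))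
    {ε : ℝ} (hε : 0 < ε) :
    ∃ g : ℂ → ℂ, Differentiable ℂ g ∧ ∀ t ∈ Icc (0:ℝ) 1, ‖g t - f t‖ ≤ ε := by
  obtain ⟨p, hp⟩ := exists_polynomial_near_of_continuousOn 0 1 (fun t => (f t).re)
    (Complex.continuous_re.comp_continuousOn hf) (ε/2) (by positivity)
  obtain ⟨q, hq⟩ := exists_polynomial_near_of_continuousOn 0 1 (fun t => (f t).im)
    (Complex.continuous_im.comp_continuousOn hf) (ε/2) (by positivity)
  refine ⟨fun ζ => aeval ζ p + Complex.I * aeval ζ q, ?_, ?_⟩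
  · exact p.differentiable_aeval.add ((differentiable_const _).mul q.differentiable_aeval)
  · intro t ht
    have hpt : aeval ((t:ℝ):ℂ) p = ((p.eval t : ℝ) : ℂ) := by
      have : ((t:ℝ):ℂ) = algebraMap ℝ ℂ t := rfl
      rw [this, aeval_algebraMap_apply_eq_algebraMap_eval]; rfl
    have hqt : aeval ((t:ℝ):ℂ) q = ((q.eval t : ℝ) : ℂ) := by
      have : ((t:ℝ):ℂ) = algebraMap ℝ ℂ t := rfl
      rw [this, aeval_algebraMap_apply_eq_algebraMap_eval]; rfl
    have hft : f t = ((f t).re : ℂ) + ((f t).im : ℂ) * Complex.I := (Complex.re_add_im _).symm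
    show ‖(aeval ((t:ℝ):ℂ) p + Complex.I * aeval ((t:ℝ):ℂ) q) - f t‖ ≤ ε
    rw [hpt, hqt]
    have heq : ((p.eval t : ℝ) : ℂ) + Complex.I * ((q.eval t : ℝ) : ℂ) - f t
        = ((p.eval t - (f t).re : ℝ) : ℂ) + ((q.eval t - (f t).im : ℝ) : ℂ) * Complex.I := by
      apply Complex.ext <;> simp
    rw [heq]
    refine le_trans (norm_add_le _ _) ?_
    rw [norm_mul, Complex.norm_I, mul_one, Complex.norm_real, Complex.norm_real]
    have := hp t ht; have := hq t ht
    simp only [Real.norm_eq_abs]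
    linarith

lemma exists_entire_approx (γ : ℝ → EuclideanSpace ℂ (Fin n)) (hγ : Continuous γ)
    {d : ℝ} (hd : 0 < d) :
    ∃ G : ℂ → EuclideanSpace ℂ (Fin n), Differentiable ℂ G ∧
      G 0 = γ 0 ∧ G 1 = γ 1 ∧ ∀ t ∈ Icc (0:ℝ) 1, ‖G ((t:ℝ):ℂ) - γ t‖ ≤ d := by
  set ε : ℝ := d/(3*(n+1)) with hε
  have hεpos : 0 < ε := by positivity
  have hcoord : ∀ j : Fin n, ∃ g : ℂ → ℂ, Differentiable ℂ g ∧
      ∀ t ∈ Icc (0:ℝ) 1, ‖g t - γ t j‖ ≤ ε := by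
    intro j
    apply complex_coord_approx (fun t => γ t j)
    · exact ((EuclideanSpace.proj j).continuous.comp hγ).continuousOn
    · exact hεpos
  choose g hgd hge using hcoord
  set P : ℂ → EuclideanSpace ℂ (Fin n) :=
    fun ζ => (EuclideanSpace.equiv (Fin n) ℂ).symm (fun j => g j ζ) with hP
  have hPd : Differentiable ℂ P := by
    apply ((EuclideanSpace.equiv (Fin n) ℂ).symm :
      (Fin n → ℂ) →L[ℂ] EuclideanSpace ℂ (Fin n)).differentiable.comp
    exact differentiable_pi.mpr fun j => hgd j
  have hPval : ∀ (ζ : ℂ) (j : Fin n), P ζ j = g j ζ := fun ζ j => rfl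
  have hPest : ∀ t ∈ Icc (0:ℝ) 1, ‖P ((t:ℝ):ℂ) - γ t‖ ≤ (n+1) * ε := by
    intro t ht
    have hco : ∀ j : Fin n, ‖(P ((t:ℝ):ℂ) - γ t) j‖ ≤ ε := by
      intro j
      have : (P ((t:ℝ):ℂ) - γ t) j = g j t - γ t j := by
        simp [hPval]
      rw [this]; exact hge j t ht
    have := EuclideanSpace.norm_eq (P ((t:ℝ):ℂ) - γ t)
    rw [this]
    have hsum : ∑ j : Fin n, ‖(P ((t:ℝ):ℂ) - γ t) j‖^2 ≤ n * ε^2 := by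
      calc ∑ j : Fin n, ‖(P ((t:ℝ):ℂ) - γ t) j‖^2 ≤ ∑ _j : Fin n, ε^2 := by
            apply Finset.sum_le_sum
            intro j _
            have h1 := hco j
            nlinarith [norm_nonneg ((P ((t:ℝ):ℂ) - γ t) j)]
        _ = n * ε^2 := by simp [Finset.sum_const]
    calc Real.sqrt (∑ j : Fin n, ‖(P ((t:ℝ):ℂ) - γ t) j‖^2) ≤ Real.sqrt ((n+1)^2 * ε^2) := by
          apply Real.sqrt_le_sqrt
          have hn : (0:ℝ) ≤ (n:ℝ) := Nat.cast_nonneg n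
          have key : (n:ℝ) ≤ ((n:ℝ)+1)^2 := by nlinarith
          exact le_trans hsum (mul_le_mul_of_nonneg_right key (sq_nonneg ε))
      _ = (n+1) * ε := by
          rw [show ((n:ℝ)+1)^2*ε^2 = (((n:ℝ)+1)*ε)^2 by ring, Real.sqrt_sq (by positivity)]
  set G : ℂ → EuclideanSpace ℂ (Fin n) :=
    fun ζ => P ζ + (1-ζ) • (γ 0 - P 0) + ζ • (γ 1 - P 1) with hG
  have hGd : Differentiable ℂ G := by
    apply Differentiable.add
    apply Differentiable.add hPd
    · exact ((differentiable_const (1:ℂ)).sub (differentiable_id : Differentiable ℂ (id : ℂ → ℂ))).smul (differentiable_const _)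
    · exact (differentiable_id : Differentiable ℂ (id : ℂ → ℂ)).smul (differentiable_const _)
  have hG0 : G 0 = γ 0 := by simp [hG]
  have hG1 : G 1 = γ 1 := by simp [hG]
  refine ⟨G, hGd, hG0, hG1, ?_⟩
  intro t ht
  obtain ⟨ht0, ht1⟩ := ht
  have h0' : ‖γ 0 - P 0‖ ≤ (n+1) * ε := by
    have := hPest 0 ⟨le_rfl, zero_le_one⟩
    rw [← norm_neg]
    simpa using this
  have h1' : ‖γ 1 - P 1‖ ≤ (n+1) * ε := by
    have := hPest 1 ⟨zero_le_one, le_rfl⟩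
    rw [← norm_neg]
    simpa using this
  have hsmul0 : ‖(1-((t:ℝ):ℂ)) • (γ 0 - P 0)‖ ≤ (n+1) * ε := by
    rw [norm_smul]
    have : ‖1-((t:ℝ):ℂ)‖ ≤ 1 := by
      rw [show (1:ℂ)-((t:ℝ):ℂ) = (((1-t:ℝ)):ℂ) by push_cast; ring, Complex.norm_real,
        Real.norm_eq_abs, _root_.abs_of_nonneg (by linarith)]
      linarith
    calc ‖1-((t:ℝ):ℂ)‖ * ‖γ 0 - P 0‖ ≤ 1 * ((n+1)*ε) := by
          apply mul_le_mul this h0' (norm_nonneg _) zero_le_one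
      _ = (n+1)*ε := one_mul _
  have hsmul1 : ‖((t:ℝ):ℂ) • (γ 1 - P 1)‖ ≤ (n+1) * ε := by
    rw [norm_smul]
    have : ‖((t:ℝ):ℂ)‖ ≤ 1 := by
      rw [Complex.norm_real, Real.norm_eq_abs, _root_.abs_of_nonneg ht0]; exact ht1
    calc ‖((t:ℝ):ℂ)‖ * ‖γ 1 - P 1‖ ≤ 1 * ((n+1)*ε) := by
          apply mul_le_mul this h1' (norm_nonneg _) zero_le_one
      _ = (n+1)*ε := one_mul _
  have hPt := hPest t ⟨ht0, ht1⟩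
  have hsplit : G ((t:ℝ):ℂ) - γ t
      = (P ((t:ℝ):ℂ) - γ t) + (1-((t:ℝ):ℂ)) • (γ 0 - P 0) + ((t:ℝ):ℂ) • (γ 1 - P 1) := by
    simp only [hG]; abel
  rw [hsplit]
  have htot : ‖(P ((t:ℝ):ℂ) - γ t) + (1-((t:ℝ):ℂ)) • (γ 0 - P 0) + ((t:ℝ):ℂ) • (γ 1 - P 1)‖
      ≤ (n+1)*ε + (n+1)*ε + (n+1)*ε := by
    refine le_trans (norm_add_le _ _) ?_
    have := norm_add_le (P ((t:ℝ):ℂ) - γ t) ((1-((t:ℝ):ℂ)) • (γ 0 - P 0))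
    have h3 := hsmul1
    linarith
  refine le_trans htot ?_
  have : ((n:ℝ)+1) * ε = d/3 := by
    rw [hε]; field_simp
  rw [this]; linarith


lemma disc_connected (Ω : Set (EuclideanSpace ℂ (Fin n))) (hΩ : IsOpen Ω)
    (hΩc : IsConnected Ω) {a b : EuclideanSpace ℂ (Fin n)} (ha : a ∈ Ω) (hb : b ∈ Ω) :
    ∃ (α : ℂ) (φ : ℂ → EuclideanSpace ℂ (Fin n)), α ∈ ball (0:ℂ) 1 ∧
      DifferentiableOn ℂ φ (ball (0:ℂ) 1) ∧ MapsTo φ (ball (0:ℂ) 1) Ω ∧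
      φ 0 = a ∧ φ α = b := by
  have hpc : IsPathConnected Ω := (hΩ.isConnected_iff_isPathConnected).mp hΩc
  obtain ⟨p, hp⟩ := hpc.joinedIn a ha b hb
  set γ : ℝ → EuclideanSpace ℂ (Fin n) := ⇑p.extend with hγdef
  have hγc : Continuous γ := p.continuous_extend
  have hγmem : ∀ t : ℝ, γ t ∈ Ω := fun t => hp _
  have hγ0 : γ 0 = a := p.extend_zero
  have hγ1 : γ 1 = b := p.extend_one
  set K : Set (EuclideanSpace ℂ (Fin n)) := γ '' Icc 0 1 with hK
  have hKc : IsCompact K := isCompact_Icc.image hγc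
  have hKΩ : K ⊆ Ω := by rintro x ⟨t, -, rfl⟩; exact hγmem t
  obtain ⟨δ, hδpos, hδ⟩ := hKc.exists_thickening_subset_open hΩ hKΩ
  obtain ⟨G, hGd, hG0, hG1, hGest⟩ := exists_entire_approx γ hγc (d := δ/3) (by positivity)
  -- uniform continuity on closedBall 0 2
  have hUC : UniformContinuousOn G (closedBall (0:ℂ) 2) :=
    (isCompact_closedBall _ _).uniformContinuousOn_of_continuous hGd.continuous.continuousOn
  rw [Metric.uniformContinuousOn_iff] at hUC
  obtain ⟨η0, hη0pos, hη0⟩ := hUC (δ/3) (by positivity)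
  set η : ℝ := min (η0/2) 1 with hη
  have hηpos : 0 < η := by positivity
  have hη1 : η ≤ 1 := min_le_right _ _
  set s : ℝ := Real.log (1 + η) with hs
  have hspos : 0 < s := Real.log_pos (by linarith)
  have hexp : Real.exp s = 1 + η := Real.exp_log (by linarith)
  obtain ⟨α, hα0, hα1, hαval⟩ := hmap_one hspos
  set φ : ℂ → EuclideanSpace ℂ (Fin n) := fun ζ => G ((hmap s ζ + 1)/2) with hφ
  have hin : ∀ ζ ∈ ball (0:ℂ) 1, ∃ t ∈ Icc (0:ℝ) 1,
      ‖(hmap s ζ + 1)/2 - (t:ℂ)‖ ≤ η/2 := by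
    intro ζ hζ
    obtain ⟨t, ht, hest⟩ := hmap_est hspos hζ
    exact ⟨t, ht, by rw [hexp] at hest; simpa using hest⟩
  refine ⟨(α:ℂ), φ, ?_, ?_, ?_, ?_, ?_⟩
  · rw [mem_ball, dist_eq_norm, sub_zero, Complex.norm_real, Real.norm_eq_abs,
      _root_.abs_of_pos hα0]
    exact hα1
  · intro ζ hζ
    apply DifferentiableAt.differentiableWithinAt
    exact hGd.differentiableAt.comp ζ (((hmap_differentiableAt hζ).add_const 1).div_const 2)
  · intro ζ hζ
    obtain ⟨t, ht, hest⟩ := hin ζ hζ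
    set u := (hmap s ζ + 1)/2 with hu
    have htball : ((t:ℝ):ℂ) ∈ closedBall (0:ℂ) 2 := by
      rw [mem_closedBall, dist_eq_norm, sub_zero, Complex.norm_real, Real.norm_eq_abs,
        _root_.abs_of_nonneg ht.1]
      linarith [ht.2]
    have huball : u ∈ closedBall (0:ℂ) 2 := by
      rw [mem_closedBall, dist_zero_right]
      calc ‖u‖ ≤ ‖u - ((t:ℝ):ℂ)‖ + ‖((t:ℝ):ℂ)‖ := by
            have := norm_add_le (u - ((t:ℝ):ℂ)) ((t:ℝ):ℂ); simpa using this
        _ ≤ η/2 + 1 := by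
            rw [Complex.norm_real, Real.norm_eq_abs, _root_.abs_of_nonneg ht.1]
            have := ht.2; have := hest; linarith
        _ ≤ 2 := by linarith
    have hdist : dist u ((t:ℝ):ℂ) < η0 := by
      rw [dist_eq_norm]
      have h2 : η ≤ η0/2 := min_le_left _ _
      calc ‖u - ((t:ℝ):ℂ)‖ ≤ η/2 := hest
        _ < η0 := by linarith
    have hG2 : dist (G u) (G ((t:ℝ):ℂ)) < δ/3 := hη0 u huball ((t:ℝ):ℂ) htball hdist
    have hG3 : ‖G ((t:ℝ):ℂ) - γ t‖ ≤ δ/3 := hGest t ht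
    have : dist (G u) (γ t) < δ := by
      calc dist (G u) (γ t) ≤ dist (G u) (G ((t:ℝ):ℂ)) + dist (G ((t:ℝ):ℂ)) (γ t) :=
            dist_triangle _ _ _
        _ < δ/3 + δ/3 := by rw [dist_eq_norm (G ((t:ℝ):ℂ))]; exact add_lt_add_of_lt_of_le hG2 hG3
        _ < δ := by linarith
    apply hδ
    rw [Metric.mem_thickening_iff]
    exact ⟨γ t, ⟨t, ht, rfl⟩, this⟩
  · show G ((hmap s 0 + 1)/2) = a
    rw [hmap_zero hspos]
    norm_num
    rw [hG0, hγ0]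
  · show G ((hmap s (α:ℂ) + 1)/2) = b
    rw [hαval]
    norm_num
    rw [hG1, hγ1]


end
end AuxStmt5

/-- Proposition 8(b): hyperbolicity at `p` implies hyperbolicity near `p`.
Let `Ω ⊆ ℂⁿ` be a domain, `p ∈ ∂Ω`, and suppose there are bounded neighbourhoods `V ⊂⊂ U`
of `p` with `c' := k_Ω(Ω ∩ V, Ω \ U) > 0`. Then `k_Ω(z,w) > 0` for all distinct
`z, w ∈ Ω ∩ V`. -/
theorem stmt_5 {n : ℕ} (Ω : Set (EuclideanSpace ℂ (Fin n)))
    (hΩ : IsOpen Ω) (hΩc : IsConnected Ω)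
    (p : EuclideanSpace ℂ (Fin n)) (hp : p ∈ frontier Ω)
    (U V : Set (EuclideanSpace ℂ (Fin n)))
    (hU : U ∈ 𝓝 p) (hV : V ∈ 𝓝 p) (hVU : closure V ⊆ U)
    (hUbd : Bornology.IsBounded U)
    (c' : ℝ) (hc' : 0 < c')
    (hsep : ∀ z ∈ Ω ∩ V, ∀ w ∈ Ω \ U, c' ≤ kobDist Ω z w) :
    ∀ z ∈ Ω ∩ V, ∀ w ∈ Ω ∩ V, z ≠ w → 0 < kobDist Ω z w := by
  intro z hz w hw hzw
  obtain ⟨R0, hR0⟩ := hUbd.subset_closedBall p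
  set R : ℝ := max R0 1 with hR
  have hRpos : (0:ℝ) < R := lt_of_lt_of_le one_pos (le_max_right _ _)
  have hRU : U ⊆ closedBall p R := hR0.trans (closedBall_subset_closedBall (le_max_left _ _))
  set t1 : ℝ := (Real.exp c' - 1) / (Real.exp c' + 1) with ht1
  obtain ⟨ht1pos, ht1lt, ht1val⟩ := artanh_tanh_repr hc'
  have hzw' : 0 < dist z w := dist_pos.mpr hzw
  set c0 : ℝ := t1 / (2*(2*R+1)) with hc0
  have hc0pos : 0 < c0 := by positivity
  set ε : ℝ := min (c'/2) (c0 * dist z w) with hε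
  have hεpos : 0 < ε := lt_min (by positivity) (by positivity)
  have hne : (kobSet Ω z w).Nonempty := by
    refine ⟨lempert Ω z w, 1, fun i => if i = 0 then z else w, by simp, by simp, ?_, by simp⟩
    intro i hi
    interval_cases i <;> simp [hz.1, hw.1]
  refine lt_of_lt_of_le hεpos (le_kobDist hne ?_)
  rintro r ⟨m, x, hx0, hxm, hxΩ, rfl⟩
  set S := ∑ i ∈ Finset.range m, lempert Ω (x i) (x (i + 1)) with hS
  by_cases hcase : c'/2 ≤ S
  · exact le_trans (min_le_left _ _) hcase
  push_neg at hcase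
  -- all partial sums are < c'/2
  have hpart : ∀ i ≤ m, kobDist Ω z (x i) ≤ ∑ j ∈ Finset.range i, lempert Ω (x j) (x (j+1)) := by
    intro i hi
    have := kobDist_le_partial (Ω := Ω) x i (fun j hj => hxΩ j (le_trans hj hi))
    rwa [hx0] at this
  have hpartS : ∀ i ≤ m, (∑ j ∈ Finset.range i, lempert Ω (x j) (x (j+1))) ≤ S := by
    intro i hi
    apply Finset.sum_le_sum_of_subset_of_nonneg
    · exact Finset.range_subset_range.mpr hi
    · intro j _ _; exact lempert_nonneg
  have hxU : ∀ i ≤ m, x i ∈ U := by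
    intro i hi
    by_contra hnot
    have h1 : c' ≤ kobDist Ω z (x i) := hsep z hz (x i) ⟨hxΩ i hi, hnot⟩
    have h2 := le_trans (hpart i hi) (hpartS i hi)
    linarith
  -- per-step lower bound
  have hstep : ∀ i, i < m → c0 * dist (x i) (x (i+1)) ≤ lempert Ω (x i) (x (i+1)) := by
    intro i him
    have hxiΩ : x i ∈ Ω := hxΩ i him.le
    have hxi1Ω : x (i+1) ∈ Ω := hxΩ (i+1) him
    have hxiU : x i ∈ closedBall p R := hRU (hxU i him.le)
    have hxi1U : x (i+1) ∈ closedBall p R := hRU (hxU (i+1) him)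
    have hTle : t1 * dist (x i) (x (i+1)) / (2*R+1) ≤ lempertT Ω (x i) (x (i+1)) := by
      rw [lempertT_eq]
      obtain ⟨β₀, ψ₀, hβ₀, h₀⟩ := disc_connected Ω hΩ hΩc hxiΩ hxi1Ω
      have hnel : (lempertSet Ω (x i) (x (i+1))).Nonempty := ⟨‖β₀‖, β₀, ψ₀, rfl, hβ₀, h₀⟩
      apply le_csInf hnel
      rintro r ⟨β, ψ, rfl, hβ, hψd, hψm, hψ0, hψβ⟩
      -- the disc stays in U on the ball of radius t1
      have htrap : ∀ ζ ∈ ball (0:ℂ) t1, ψ ζ ∈ closedBall p R := by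
        intro ζ hζ
        have hζ1 : ζ ∈ ball (0:ℂ) 1 := ball_subset_ball ht1lt.le hζ
        have hψζΩ : ψ ζ ∈ Ω := hψm hζ1
        have hup : kobDist Ω z (ψ ζ) ≤
            (∑ j ∈ Finset.range i, lempert Ω (x j) (x (j+1))) + lempert Ω (x i) (ψ ζ) := by
          have := kobDist_le_partial_add (Ω := Ω) x i (fun j hj => hxΩ j (le_trans hj him.le))
            (ψ ζ) hψζΩ
          rwa [hx0] at this
        have hle : lempert Ω (x i) (ψ ζ) ≤ artanh ‖ζ‖ :=
          lempert_le_artanh hζ1 hψd hψm hψ0 rfl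
        have hζt1 : ‖ζ‖ ≤ t1 := by
          rw [mem_ball, dist_eq_norm, sub_zero] at hζ; exact hζ.le
        have hart : artanh ‖ζ‖ ≤ c'/2 := by
          rw [← ht1val]; exact artanh_mono (norm_nonneg _) hζt1 ht1lt
        have hk : kobDist Ω z (ψ ζ) < c' := by
          have := le_trans (hpartS i him.le) hcase.le
          have hps := hpartS i him.le
          linarith [hpart i him.le]
        by_contra hnotU
        have hU2 : ψ ζ ∉ U := fun hinU => hnotU (hRU hinU)
        have := hsep z hz (ψ ζ) ⟨hψζΩ, hU2⟩
        linarith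
      -- Schwarz
      have hmaps : MapsTo ψ (ball (0:ℂ) t1) (ball (ψ 0) (2*R+1)) := by
        intro ζ hζ
        have h1 := htrap ζ hζ
        have h2 : ψ 0 ∈ closedBall p R := by rw [hψ0]; exact hxiU
        rw [mem_ball]
        calc dist (ψ ζ) (ψ 0) ≤ dist (ψ ζ) p + dist p (ψ 0) := dist_triangle _ _ _
          _ ≤ R + R := add_le_add (mem_closedBall.mp h1) (by rw [dist_comm]; exact h2)
          _ < 2*R+1 := by linarith
      have hd' : DifferentiableOn ℂ ψ (ball (0:ℂ) t1) := hψd.mono (ball_subset_ball ht1lt.le)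
      by_cases hβt : β ∈ ball (0:ℂ) t1
      · have := Complex.dist_le_div_mul_dist_of_mapsTo_ball hd' (hmaps.mono_right ball_subset_closedBall) hβt
        rw [hψ0, hψβ] at this
        have hd0 : dist β 0 = ‖β‖ := by rw [dist_eq_norm, sub_zero]
        rw [hd0, dist_comm] at this
        rw [div_le_iff₀ (by positivity)]
        calc t1 * dist (x i) (x (i+1)) ≤ t1 * ((2*R+1)/t1 * ‖β‖) := by
              apply mul_le_mul_of_nonneg_left this ht1pos.le
          _ = ‖β‖ * (2*R+1) := by have h : t1 ≠ 0 := ht1pos.ne'; field_simp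
      · have hβn : t1 ≤ ‖β‖ := by
          rw [mem_ball, dist_eq_norm, sub_zero] at hβt; linarith [not_lt.mp hβt]
        have hdd : dist (x i) (x (i+1)) ≤ 2*R+1 := by
          calc dist (x i) (x (i+1)) ≤ dist (x i) p + dist p (x (i+1)) := dist_triangle _ _ _
            _ ≤ R + R := add_le_add (mem_closedBall.mp hxiU)
                (by rw [dist_comm]; exact hxi1U)
            _ ≤ 2*R+1 := by linarith
        rw [div_le_iff₀ (by positivity)]
        calc t1 * dist (x i) (x (i+1)) ≤ t1 * (2*R+1) := by
              apply mul_le_mul_of_nonneg_left hdd ht1pos.le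
          _ ≤ ‖β‖ * (2*R+1) := by
              apply mul_le_mul_of_nonneg_right hβn (by positivity)
    -- from lempertT to lempert
    have hne2 : (lempertSet Ω (x i) (x (i+1))).Nonempty := by
      obtain ⟨β₀, ψ₀, hβ₀, h₀⟩ := disc_connected Ω hΩ hΩc hxiΩ hxi1Ω
      exact ⟨‖β₀‖, β₀, ψ₀, rfl, hβ₀, h₀⟩
    have h1 : lempertT Ω (x i) (x (i+1)) / 2 ≤ lempert Ω (x i) (x (i+1)) :=
      half_le_artanh lempertT_nonneg (lempertT_lt_one hne2)
    have h3 : c0 * dist (x i) (x (i+1)) = (t1 * dist (x i) (x (i+1)) / (2*R+1))/2 := by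
      rw [hc0, div_mul_eq_mul_div, div_div]; ring_nf
    rw [h3]
    linarith
  -- sum up
  have hsum : c0 * dist z w ≤ S := by
    have htri : dist z w ≤ ∑ i ∈ Finset.range m, dist (x i) (x (i+1)) := by
      have := dist_le_range_sum_dist x m
      rwa [hx0, hxm] at this
    calc c0 * dist z w ≤ c0 * ∑ i ∈ Finset.range m, dist (x i) (x (i+1)) := by
          apply mul_le_mul_of_nonneg_left htri hc0pos.le
      _ = ∑ i ∈ Finset.range m, c0 * dist (x i) (x (i+1)) := Finset.mul_sum _ _ _
      _ ≤ S := Finset.sum_le_sum fun i hi => hstep i (Finset.mem_range.mp hi)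
  exact le_trans (min_le_right _ _) hsum
end

section
/- Let Ω ⊆ ℂⁿ be a domain, p ∈ ∂Ω a k-point, and suppose the estimate k_Ω(z,w) ≤ log(1 + 2‖z-w‖/√(δ_Ω(z)δ_Ω(w))) holds for z,w ∈ Ω in some neighbourhood U₀ of p. Then p is a w-point: for every neighbourhood U of p with Ω\U ≠ ∅, lim_{z,w→p} inf_{o∈Ω\U} (z|w)^Ω_o = ∞. -/
open Set Metric Filter Topology MeasureTheory

/-- `p ∈ ∂Ω` is a `k`-point: for every neighbourhood `U` of `p`,
`liminf_{z→p} (k_Ω(z, Ω\U) − (1/2)log(1/δ_Ω(z))) > −∞`. -/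
def IsKPoint {n : ℕ} (Ω : Set (EuclideanSpace ℂ (Fin n)))
    (p : EuclideanSpace ℂ (Fin n)) : Prop :=
  ∀ U ∈ 𝓝 p, ∃ C : ℝ, ∃ V ∈ 𝓝 p, ∀ z ∈ Ω ∩ V, ∀ o ∈ Ω \ U,
    (1 / 2) * Real.log (1 / bdist Ω z) - C ≤ kobDist Ω z o

/-- second half of Proposition 5. Let `Ω ⊆ ℂⁿ` be a domain and `p ∈ ∂Ω` a
`k`-point such that `k_Ω(z,w) ≤ log(1 + 2‖z−w‖/√(δ_Ω(z)δ_Ω(w)))` holds for `z, w ∈ Ω` in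
some neighbourhood `U₀` of `p`. Then `p` is a `w`-point. -/
theorem stmt_11 {n : ℕ} (Ω : Set (EuclideanSpace ℂ (Fin n)))
    (hΩ : IsOpen Ω) (hΩc : IsConnected Ω)
    (p : EuclideanSpace ℂ (Fin n)) (hp : p ∈ frontier Ω)
    (hk : IsKPoint Ω p)
    (hdini : ∃ U₀ ∈ 𝓝 p, ∀ z ∈ Ω ∩ U₀, ∀ w ∈ Ω ∩ U₀,
      kobDist Ω z w ≤ Real.log (1 + 2 * ‖z - w‖ / Real.sqrt (bdist Ω z * bdist Ω w))) :
    IsWPoint Ω p := by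
  intro U hU _hne M
  obtain ⟨C, Vk, hVk, hC⟩ := hk U hU
  obtain ⟨U₀, hU₀, hd⟩ := hdini
  set r : ℝ := Real.exp (-(2 * M) - 2 * C) / 5 with hrdef
  have hrpos : 0 < r := by positivity
  refine ⟨Vk ∩ U₀ ∩ ball p r,
    inter_mem (inter_mem hVk hU₀) (ball_mem_nhds p hrpos), ?_⟩
  have hδ : ∀ x, x ∈ Ω → x ∈ ball p r → 0 < bdist Ω x ∧ bdist Ω x < r := by
    intro x hxΩ hxb
    have hxf : x ∉ frontier Ω := fun h => h.2 (by rw [hΩ.interior_eq]; exact hxΩ)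
    constructor
    · exact (isClosed_frontier.notMem_iff_infDist_pos ⟨p, hp⟩).1 hxf
    · exact lt_of_le_of_lt (Metric.infDist_le_dist_of_mem hp) (mem_ball.mp hxb)
  rintro z ⟨hzΩ, ⟨hzV, hzU⟩, hzb⟩ w ⟨hwΩ, ⟨hwV, hwU⟩, hwb⟩ o ho
  obtain ⟨hδz, hδzr⟩ := hδ z hzΩ hzb
  obtain ⟨hδw, hδwr⟩ := hδ w hwΩ hwb
  set s : ℝ := Real.sqrt (bdist Ω z * bdist Ω w) with hsdef
  have hspos : 0 < s := Real.sqrt_pos.2 (by positivity)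
  set t : ℝ := ‖z - w‖ with htdef
  have htnn : 0 ≤ t := norm_nonneg _
  -- bound on t
  have ht2r : t < 2 * r := by
    have : dist z w ≤ dist z p + dist p w := dist_triangle z p w
    have h1 : dist z p < r := mem_ball.mp hzb
    have h2 : dist p w < r := by rw [dist_comm]; exact mem_ball.mp hwb
    calc t = dist z w := (dist_eq_norm z w).symm
      _ ≤ dist z p + dist p w := dist_triangle z p w
      _ < 2 * r := by linarith
  have hsr : s ≤ r := by
    rw [hsdef]
    calc Real.sqrt (bdist Ω z * bdist Ω w) ≤ Real.sqrt (r * r) :=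
          Real.sqrt_le_sqrt (by nlinarith)
      _ = r := by rw [Real.sqrt_mul_self hrpos.le]
  have hst5r : s + 2 * t ≤ 5 * r := by linarith
  have h5r : Real.log (5 * r) = -(2 * M) - 2 * C := by
    have : 5 * r = Real.exp (-(2 * M) - 2 * C) := by rw [hrdef]; ring
    rw [this, Real.log_exp]
  have hlog_st : Real.log (s + 2 * t) ≤ -(2 * M) - 2 * C := by
    rw [← h5r]
    exact (Real.log_le_log_iff (by linarith) (by linarith)).2 hst5r
  have hlogs : Real.log s = (Real.log (bdist Ω z) + Real.log (bdist Ω w)) / 2 := by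
    rw [hsdef, Real.log_sqrt (by positivity), Real.log_mul hδz.ne' hδw.ne']
  -- rewrite the dini bound
  have hdini' : kobDist Ω z w ≤ Real.log (s + 2 * t) - Real.log s := by
    have h := hd z ⟨hzΩ, hzU⟩ w ⟨hwΩ, hwU⟩
    have heq : 1 + 2 * ‖z - w‖ / Real.sqrt (bdist Ω z * bdist Ω w) = (s + 2 * t) / s := by
      rw [← hsdef, ← htdef]; field_simp
    rw [heq, Real.log_div (by linarith) hspos.ne'] at h
    exact h
  have h1 := hC z ⟨hzΩ, hzV⟩ o ho
  have h2 := hC w ⟨hwΩ, hwV⟩ o ho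
  have e1 : Real.log (1 / bdist Ω z) = -Real.log (bdist Ω z) := by
    rw [one_div, Real.log_inv]
  have e2 : Real.log (1 / bdist Ω w) = -Real.log (bdist Ω w) := by
    rw [one_div, Real.log_inv]
  rw [e1] at h1; rw [e2] at h2
  have hkzw : kobDist Ω z w ≤ (-(2 * M) - 2 * C)
      - (Real.log (bdist Ω z) + Real.log (bdist Ω w)) / 2 := by
    calc kobDist Ω z w ≤ Real.log (s + 2 * t) - Real.log s := hdini'
      _ ≤ _ := by rw [hlogs]; linarith
  rw [gromovK]
  linarith
end

section
/- Abstract version of the k-point implications: Let (X,d) be a metric space inside ℂⁿ (or ℝᵐ) with boundary ∂X, p ∈ ∂X, and δ(x) = dist(x,∂X). Assume: (i) for every neighbourhood U of p there is C_U ∈ ℝ with d(z, X\U) ≥ (1/2)log(1/δ(z)) - C_U for z near p, and (ii) d(z,w) ≤ log(1 + 2‖z-w‖/√(δ(z)δ(w))) for z,w near p. Then lim_{z,w→p} inf_{o ∈ X\U} (1/2)(d(z,o)+d(w,o)-d(z,w)) = ∞ for every neighbourhood U of p with X\U ≠ ∅. -/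
open Set Filter Topology

/-- abstract version of the `k`-point implications, Proposition 5.
`X` is an open set in `ℂⁿ`, `p ∈ ∂X`, `d` is a pseudodistance on `ℂⁿ` (symmetric, triangle
inequality, nonnegative), `δ(x) = dist(x, ∂X)`. Assume:
(i) for every neighbourhood `U` of `p` there are a constant `C_U` and a neighbourhood `V` of
`p` with `d(z, o) ≥ (1/2)·log(1/δ(z)) − C_U` for all `z ∈ X ∩ V` and `o ∈ X \ U`
(so `d(z, X \ U) ≥ (1/2)log(1/δ(z)) − C_U` for `z` near `p`);
(ii) `d(z,w) ≤ log(1 + 2‖z−w‖/√(δ(z)δ(w)))` for `z, w ∈ X` near `p`.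
Then for every neighbourhood `U` of `p` with `X \ U ≠ ∅`,
`lim_{z,w→p} inf_{o ∈ X\U} (1/2)(d(z,o)+d(w,o)−d(z,w)) = ∞`. -/
theorem stmt_12 {n : ℕ} (X : Set (EuclideanSpace ℂ (Fin n))) (hX : IsOpen X)
    (p : EuclideanSpace ℂ (Fin n)) (hp : p ∈ frontier X)
    (d : EuclideanSpace ℂ (Fin n) → EuclideanSpace ℂ (Fin n) → ℝ)
    (hsymm : ∀ z w, d z w = d w z)
    (htri : ∀ z w o, d z w ≤ d z o + d o w)
    (hnonneg : ∀ z w, 0 ≤ d z w)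
    (δ : EuclideanSpace ℂ (Fin n) → ℝ) (hδ : ∀ x, δ x = Metric.infDist x (frontier X))
    (hi : ∀ U ∈ 𝓝 p, ∃ C : ℝ, ∃ V ∈ 𝓝 p, ∀ z ∈ X ∩ V, ∀ o ∈ X \ U,
      (1 / 2) * Real.log (1 / δ z) - C ≤ d z o)
    (hii : ∃ U₀ ∈ 𝓝 p, ∀ z ∈ X ∩ U₀, ∀ w ∈ X ∩ U₀,
      d z w ≤ Real.log (1 + 2 * ‖z - w‖ / Real.sqrt (δ z * δ w))) :
    ∀ U ∈ 𝓝 p, (X \ U).Nonempty → ∀ M : ℝ, ∃ V ∈ 𝓝 p,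
      ∀ z ∈ X ∩ V, ∀ w ∈ X ∩ V, ∀ o ∈ X \ U,
        M ≤ (d z o + d w o - d z w) / 2 := by
  obtain ⟨U₀, hU₀n, hU₀⟩ := hii
  intro U hU _ M
  obtain ⟨C, V₀, hV₀n, hV₀⟩ := hi U hU
  obtain ⟨ε, hεpos, hball⟩ := Metric.mem_nhds_iff.mp (inter_mem hV₀n hU₀n)
  set ε' := min ε (Real.exp (-2 * (M + C)) / 5) with hε'def
  have hε'pos : 0 < ε' := lt_min hεpos (by positivity)
  refine ⟨Metric.ball p ε', Metric.ball_mem_nhds p hε'pos, ?_⟩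
  intro z hz w hw o ho
  have hsub : Metric.ball p ε' ⊆ V₀ ∩ U₀ :=
    (Metric.ball_subset_ball (min_le_left _ _)).trans hball
  have hzV := hsub hz.2
  have hwV := hsub hw.2
  have hfr : (frontier X).Nonempty := ⟨p, hp⟩
  have hδpos : ∀ x ∈ X, 0 < δ x := by
    intro x hx
    rw [hδ]
    refine (isClosed_frontier.notMem_iff_infDist_pos hfr).mp fun hxf => ?_
    exact hxf.2 (by rwa [hX.interior_eq])
  have hδz := hδpos z hz.1
  have hδw := hδpos w hw.1
  have hδlt : ∀ x ∈ X ∩ Metric.ball p ε', δ x < ε' := by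
    intro x hx
    calc δ x ≤ dist x p := by rw [hδ]; exact Metric.infDist_le_dist_of_mem hp
    _ < ε' := Metric.mem_ball.mp hx.2
  have hδzlt := hδlt z hz
  have hδwlt := hδlt w hw
  -- the distance d z w bound
  have hdzw := hU₀ z ⟨hz.1, hzV.2⟩ w ⟨hw.1, hwV.2⟩
  set s := Real.sqrt (δ z * δ w) with hs
  have hspos : 0 < s := Real.sqrt_pos.mpr (by positivity)
  set r := ‖z - w‖ with hr
  have hrnn : 0 ≤ r := norm_nonneg _
  have h1 : (1 : ℝ) + 2 * r / s = (s + 2 * r) / s := by field_simp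
  have hlogs : Real.log s = (Real.log (δ z) + Real.log (δ w)) / 2 := by
    rw [hs, Real.log_sqrt (by positivity), Real.log_mul hδz.ne' hδw.ne']
  have hdzw' : d z w ≤ Real.log (s + 2 * r) - (Real.log (δ z) + Real.log (δ w)) / 2 := by
    rw [← hlogs]
    calc d z w ≤ Real.log ((s + 2 * r) / s) := by rwa [← h1]
    _ = Real.log (s + 2 * r) - Real.log s := Real.log_div (by positivity) hspos.ne'
  -- the lower bounds on d z o and d w o
  have hdzo := hV₀ z ⟨hz.1, hzV.1⟩ o ho
  have hdwo := hV₀ w ⟨hw.1, hwV.1⟩ o ho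
  simp only [one_div, Real.log_inv] at hdzo hdwo
  -- bound on log (s + 2r)
  have hslt : s < ε' := by
    rw [hs]
    calc Real.sqrt (δ z * δ w) < Real.sqrt (ε' * ε') := by
          apply Real.sqrt_lt_sqrt (by positivity)
          exact mul_lt_mul'' hδzlt hδwlt hδz.le hδw.le
    _ = ε' := by rw [Real.sqrt_mul_self hε'pos.le]
  have hrlt : r < 2 * ε' := by
    have : dist z w < 2 * ε' := by
      calc dist z w ≤ dist z p + dist p w := dist_triangle z p w
      _ < ε' + ε' := add_lt_add (Metric.mem_ball.mp hz.2)
            (by rw [dist_comm]; exact Metric.mem_ball.mp hw.2)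
      _ = 2 * ε' := by ring
    rwa [dist_eq_norm] at this
  have hlog : Real.log (s + 2 * r) < -2 * (M + C) := by
    have h5 : s + 2 * r < Real.exp (-2 * (M + C)) := by
      have : s + 2 * r < 5 * ε' := by linarith
      have h2 : 5 * ε' ≤ Real.exp (-2 * (M + C)) := by
        have := min_le_right ε (Real.exp (-2 * (M + C)) / 5)
        rw [← hε'def] at this
        linarith
      linarith
    calc Real.log (s + 2 * r) < Real.log (Real.exp (-2 * (M + C))) :=
          Real.log_lt_log (by positivity) h5
    _ = -2 * (M + C) := Real.log_exp _
  linarith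
end

section
/- Let (X,d) be a length pseudometric space, p a boundary point, and z,w ∈ X. Suppose V ⊂⊂ U are neighbourhoods of p with c' := d(X ∩ V, X \ U) > 0. Suppose further that the length structure satisfies the Royden-type bound: for every absolutely continuous curve γ contained in X ∩ U, L(γ) ≥ tanh(c')·L_{X∩U}(γ), where L_{X∩U} is the induced length in the subspace X ∩ U. Then for all z, w ∈ X ∩ V lying in the same component of X ∩ U, d(z,w) ≥ tanh(c')·min(d_{X∩U}(z,w), d_{X∩U}(z, ∂V ∩ X)). -/
open Set Filter Topology

/-- abstract two-case argument in Proposition 8(b).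
`X` is a length pseudometric space sitting in an ambient topological space `T` via a
continuous map `ι`, with `p ∈ T` a boundary point and neighbourhoods `V ⊂⊂ U` of `p`.
`d` is the intrinsic distance on `X` (infimum of the lengths `L` of curves), and `dU` is the
induced intrinsic distance of `X ∩ U` (infimum of the induced lengths `LU` of curves staying
in `X ∩ U`). Assume `c' := d(X ∩ V, X \ U) > 0` and the Royden-type bound
`L(γ) ≥ tanh(c')·LU(γ)` for every curve `γ` contained in `X ∩ U`. Then for all
`z, w ∈ X ∩ V` in the same connected component of `X ∩ U`,
`d(z,w) ≥ tanh(c')·min(dU(z,w), dU(z, ∂V ∩ X))`. -/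
theorem stmt_16 {X T : Type*} [TopologicalSpace X] [TopologicalSpace T]
    (ι : X → T) (hι : Continuous ι) (p : T)
    (U V : Set T) (hU : U ∈ 𝓝 p) (hV : V ∈ 𝓝 p) (hVU : closure V ⊆ U)
    (d dU : X → X → ℝ) (L LU : (ℝ → X) → ℝ → ℝ → ℝ)
    -- `d` is the infimum of lengths: lower bound and existence of almost-geodesics
    (hdL : ∀ (γ : ℝ → X) (a b : ℝ), a ≤ b → ContinuousOn γ (Icc a b) →
      d (γ a) (γ b) ≤ L γ a b)
    (hgeo : ∀ (z w : X), ∀ ε > (0 : ℝ), ∃ (γ : ℝ → X) (a b : ℝ), a ≤ b ∧ γ a = z ∧ γ b = w ∧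
      ContinuousOn γ (Icc a b) ∧ L γ a b ≤ d z w + ε)
    -- lengths are nonnegative and monotone under restriction
    (hLU0 : ∀ γ a b, 0 ≤ LU γ a b)
    (hLmono : ∀ (γ : ℝ → X) (a b a' b' : ℝ), a ≤ a' → a' ≤ b' → b' ≤ b →
      L γ a' b' ≤ L γ a b)
    -- `dU` is bounded by the induced length of curves staying in `X ∩ U`
    (hdU : ∀ (γ : ℝ → X) (a b : ℝ), a ≤ b → ContinuousOn γ (Icc a b) →
      (∀ t ∈ Icc a b, ι (γ t) ∈ U) → dU (γ a) (γ b) ≤ LU γ a b)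
    -- the separation constant
    (c' : ℝ) (hc' : 0 < c')
    (hsep : ∀ z w : X, ι z ∈ V → ι w ∉ U → c' ≤ d z w)
    -- Royden-type bound for curves contained in `X ∩ U`
    (hroyden : ∀ (γ : ℝ → X) (a b : ℝ), (∀ t ∈ Icc a b, ι (γ t) ∈ U) →
      Real.tanh c' * LU γ a b ≤ L γ a b)
    (z w : X) (hz : ι z ∈ V) (hw : ι w ∈ V)
    (hcomp : w ∈ connectedComponentIn (ι ⁻¹' U) z) :
    Real.tanh c' * min (dU z w) (sInf {r : ℝ | ∃ x : X, ι x ∈ frontier V ∧ r = dU z x})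
      ≤ d z w := by
  have htanh : 0 ≤ Real.tanh c' := by
    rw [Real.tanh_eq_sinh_div_cosh]
    exact div_nonneg (le_of_lt (by rwa [Real.sinh_pos_iff])) (Real.cosh_pos c').le
  set S : Set ℝ := {r : ℝ | ∃ x : X, ι x ∈ frontier V ∧ r = dU z x} with hS
  refine le_of_forall_pos_le_add fun ε hε => ?_
  obtain ⟨γ, a, b, hab, hga, hgb, hcont, hLle⟩ := hgeo z w ε hε
  by_cases hin : ∀ t ∈ Icc a b, ι (γ t) ∈ U
  · -- Case 1: the curve stays in X ∩ U
    calc Real.tanh c' * min (dU z w) (sInf S)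
        ≤ Real.tanh c' * dU z w := by
          exact mul_le_mul_of_nonneg_left (min_le_left _ _) htanh
      _ ≤ Real.tanh c' * LU γ a b := by
          have := hdU γ a b hab hcont hin
          rw [hga, hgb] at this
          exact mul_le_mul_of_nonneg_left this htanh
      _ ≤ L γ a b := hroyden γ a b hin
      _ ≤ d z w + ε := hLle
  · -- Case 2: the curve leaves U, hence leaves V; take the first exit time from V
    push_neg at hin
    obtain ⟨t₁, ht₁, ht₁U⟩ := hin
    set B : Set ℝ := {t | t ∈ Icc a b ∧ ι (γ t) ∉ V} with hB
    have ht₁B : t₁ ∈ B := ⟨ht₁, fun h => ht₁U (hVU (subset_closure h))⟩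
    have hBne : B.Nonempty := ⟨t₁, ht₁B⟩
    have hBbdd : BddBelow B := ⟨a, fun t ht => ht.1.1⟩
    set t₀ : ℝ := sInf B with ht₀
    have hat₀ : a ≤ t₀ := le_csInf hBne fun t ht => ht.1.1
    have ht₀b : t₀ ≤ b := le_trans (csInf_le hBbdd ht₁B) ht₁.2
    have ht₀mem : t₀ ∈ Icc a b := ⟨hat₀, ht₀b⟩
    -- points strictly before t₀ are in V
    have hbefore : ∀ t, a ≤ t → t < t₀ → ι (γ t) ∈ V := by
      intro t hat htt
      by_contra hcon
      exact absurd (csInf_le hBbdd ⟨⟨hat, le_trans htt.le ht₀b⟩, hcon⟩) (not_le.mpr htt)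
    -- ι (γ t₀) ∈ closure V
    have hclos : ι (γ t₀) ∈ closure V := by
      rcases eq_or_lt_of_le hat₀ with heq | hlt
      · rw [← heq, hga]; exact subset_closure hz
      · have hct : ContinuousWithinAt (ι ∘ γ) (Ico a t₀) t₀ := by
          have := (hι.comp_continuousOn hcont).continuousWithinAt ht₀mem
          exact this.mono (fun t ht => ⟨ht.1, le_trans ht.2.le ht₀b⟩)
        have ht₀cl : t₀ ∈ closure (Ico a t₀) := by
          rw [closure_Ico (ne_of_lt hlt)]; exact ⟨hat₀, le_refl _⟩
        have := hct.mem_closure_image ht₀cl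
        refine closure_mono ?_ this
        rintro _ ⟨t, ht, rfl⟩
        exact hbefore t ht.1 ht.2
    -- ι (γ t₀) ∉ interior V
    have hnint : ι (γ t₀) ∉ interior V := by
      intro hcon
      have hct : ContinuousWithinAt (ι ∘ γ) (Icc a b) t₀ :=
        (hι.comp_continuousOn hcont).continuousWithinAt ht₀mem
      have hnhds : (ι ∘ γ) ⁻¹' interior V ∈ 𝓝[Icc a b] t₀ :=
        hct (isOpen_interior.mem_nhds hcon)
      rw [mem_nhdsWithin] at hnhds
      obtain ⟨O, hOopen, hOt₀, hOsub⟩ := hnhds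
      obtain ⟨δ, hδ, hball⟩ := Metric.isOpen_iff.mp hOopen t₀ hOt₀
      obtain ⟨s, hsB, hs⟩ := (csInf_lt_iff hBbdd hBne).mp
        (show t₀ < t₀ + δ by linarith)
      have hst₀ : t₀ ≤ s := csInf_le hBbdd hsB
      have hsO : s ∈ O := hball (by
        rw [Metric.mem_ball, Real.dist_eq, abs_lt]; constructor <;> linarith)
      exact hsB.2 (interior_subset (hOsub ⟨hsO, hsB.1⟩))
    have hfront : ι (γ t₀) ∈ frontier V := ⟨hclos, hnint⟩
    -- the curve on [a, t₀] stays in U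
    have hinU : ∀ t ∈ Icc a t₀, ι (γ t) ∈ U := by
      intro t ⟨h1, h2⟩
      rcases eq_or_lt_of_le h2 with heq | hlt
      · rw [heq]; exact hVU hclos
      · exact hVU (subset_closure (hbefore t h1 hlt))
    have hcont' : ContinuousOn γ (Icc a t₀) :=
      hcont.mono (Icc_subset_Icc le_rfl ht₀b)
    have hdUle : dU z (γ t₀) ≤ LU γ a t₀ := by
      have := hdU γ a t₀ hat₀ hcont' hinU
      rwa [hga] at this
    have hchain : Real.tanh c' * LU γ a t₀ ≤ d z w + ε :=
      le_trans (hroyden γ a t₀ hinU)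
        (le_trans (hLmono γ a b a t₀ le_rfl hat₀ ht₀b) hLle)
    by_cases hbdd : BddBelow S
    · calc Real.tanh c' * min (dU z w) (sInf S)
          ≤ Real.tanh c' * sInf S :=
            mul_le_mul_of_nonneg_left (min_le_right _ _) htanh
        _ ≤ Real.tanh c' * dU z (γ t₀) :=
            mul_le_mul_of_nonneg_left (csInf_le hbdd ⟨γ t₀, hfront, rfl⟩) htanh
        _ ≤ Real.tanh c' * LU γ a t₀ := mul_le_mul_of_nonneg_left hdUle htanh
        _ ≤ d z w + ε := hchain
    · have hS0 : sInf S = 0 := Real.sInf_of_not_bddBelow hbdd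
      calc Real.tanh c' * min (dU z w) (sInf S)
          ≤ Real.tanh c' * sInf S :=
            mul_le_mul_of_nonneg_left (min_le_right _ _) htanh
        _ = 0 := by rw [hS0, mul_zero]
        _ ≤ Real.tanh c' * LU γ a t₀ := mul_nonneg htanh (hLU0 γ a t₀)
        _ ≤ d z w + ε := hchain
end
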